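/- Fix 1 ≤ i ≤ s, and let f_i ∈ ℂ[x,y] be a Weierstrass polynomial in y of degree e_i with ι_i^* f_i = 0 and Supp(f_i) ⊆ N_i. If g ∈ ℂ[x,y] is a nonzero polynomial with ι_i^* g = 0 and Supp(g) ⊆ N_i, then there exists a nonzero a ∈ ℂ such that g = a·f_i. -/

import Mathlib

noncomputable def pOrdQ (p : Polynomial ℂ) : WithTop ℚ :=
  WithTop.map (fun m : ℕ => (m : ℚ)) p.trailingDegree

/-- Truncated parametrization pullback on ℂ[x][y]: x ↦ t^e, y ↦ yi. -/
noncomputable def iotaP (e : ℕ) (yi : Polynomial ℂ) (g : Polynomial (Polynomial ℂ)) :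
    Polynomial ℂ :=
  Polynomial.eval₂ (Polynomial.aeval (Polynomial.X ^ e : Polynomial ℂ)).toRingHom yi g

open Polynomial in
lemma aux_coeff_scale (ζ : ℂ) (p : ℂ[X]) (n : ℕ) :
    (aeval (C ζ * X) p).coeff n = ζ ^ n * p.coeff n := by
  induction p using Polynomial.induction_on' with
  | add p q hp hq => simp [hp, hq, mul_add]
  | monomial m a =>
    simp only [aeval_monomial, algebraMap_eq, mul_pow, ← C_pow, ← mul_assoc, ← C_mul,
      coeff_C_mul, coeff_X_pow, coeff_monomial]
    rcases eq_or_ne n m with h | h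
    · subst h; simp; ring
    · simp [h, Ne.symm h]

set_option maxHeartbeats 1000000 in
open Polynomial in
theorem stmt_12
    (s : ℕ) (hs : 1 ≤ s)
    (lam : ℕ → ℚ) (hlam1 : 1 < lam 1)
    (hlam_mono : ∀ i, 1 ≤ i → i < s → lam i < lam (i + 1))
    (M : ℕ → AddSubgroup ℚ)
    (hM : ∀ i, M i = AddSubgroup.closure ({1} ∪ lam '' Set.Icc 1 i))
    (hlamM : ∀ i, 1 ≤ i → i ≤ s → lam i ∉ M (i - 1))
    (kk : ℕ → ℕ)
    (hkk : ∀ i, 1 ≤ i → i ≤ s →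
      IsLeast {m : ℕ | 0 < m ∧ (m : ℚ) * lam i ∈ M (i - 1)} (kk i))
    (e : ℕ → ℕ) (he0 : e 0 = 1)
    (he : ∀ i, 1 ≤ i → i ≤ s → e i = kk i * e (i - 1))
    (gam : ℕ → ℕ → ℚ)
    (hgam1 : ∀ j, 1 ≤ j → j ≤ s → gam j 1 = (e j : ℚ) * lam 1)
    (hgam : ∀ j, 1 ≤ j → j ≤ s → ∀ ℓ, 1 ≤ ℓ → ℓ ≤ j - 1 →
      gam j (ℓ + 1) = (kk ℓ : ℚ) * gam j ℓ - (e j : ℚ) * lam ℓ + (e j : ℚ) * lam (ℓ + 1))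
    (c : ℕ → ℂ) (hc : ∀ ℓ, 1 ≤ ℓ → ℓ ≤ s → c ℓ ≠ 0)
    (φ : ℕ → Polynomial ℂ)
    (hφ0 : ∀ ℓ, 1 ≤ ℓ → ℓ ≤ s → (φ ℓ).coeff 0 = 0)
    (hφsupp : ∀ ℓ, 1 ≤ ℓ → ℓ ≤ s → ∀ a ∈ (φ ℓ).support,
      ∃ m ∈ M ℓ, (a : ℚ) = (e s : ℚ) * m)
    (hφord : ∀ ℓ, 1 ≤ ℓ → ℓ ≤ s → ∀ a ∈ (φ ℓ).support, (e s : ℚ) * lam ℓ < (a : ℚ))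
    (hφdeg : ∀ ℓ, 1 ≤ ℓ → ℓ < s → ∀ a ∈ (φ ℓ).support, (a : ℚ) < (e s : ℚ) * lam (ℓ + 1))
    (E : ℕ → ℕ → ℕ)
    (hE : ∀ i, 1 ≤ i → i ≤ s → ∀ ℓ, 1 ≤ ℓ → ℓ ≤ i → (E i ℓ : ℚ) = (e i : ℚ) * lam ℓ)
    (φs : ℕ → ℕ → Polynomial ℂ)
    (hφs : ∀ i, 1 ≤ i → i ≤ s → ∀ ℓ, 1 ≤ ℓ → ℓ ≤ i →
      (φs i ℓ).comp (Polynomial.X ^ (e s / e i)) = φ ℓ)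
    (Y : ℕ → Polynomial ℂ)
    (hY : ∀ i, 1 ≤ i → i ≤ s →
      Y i = ∑ ℓ ∈ Finset.Icc 1 i, (Polynomial.C (c ℓ) * Polynomial.X ^ E i ℓ + φs i ℓ))
    (mu : ℕ → ℚ)
    (hmu : ∀ i, 1 ≤ i → i ≤ s →
      (φ i ≠ 0 → mu i = ((φs i i).natDegree : ℚ) / (e i : ℚ)) ∧ (φ i = 0 → mu i = lam i))
    (NN : ℕ → Set (ℕ × ℕ))
    (hNN : ∀ i, 1 ≤ i → i ≤ s → NN i = {p : ℕ × ℕ |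
      (e i : ℚ) * ((kk 1 : ℚ) * lam 1) ≤ (kk 1 : ℚ) * p.1 + ((kk 1 : ℚ) * lam 1) * p.2 ∧
      (e i : ℚ) * p.1 + ((e i : ℚ) * mu i) * p.2 ≤ (e i : ℚ) * ((e i : ℚ) * mu i)}) :
    ∀ i, 1 ≤ i → i ≤ s → ∀ fi g : Polynomial (Polynomial ℂ),
      (fi.Monic ∧ fi.natDegree = e i ∧ ∀ ℓ < e i, (fi.coeff ℓ).coeff 0 = 0) →
      iotaP (e i) (Y i) fi = 0 →
      (∀ α β : ℕ, (fi.coeff β).coeff α ≠ 0 → (α, β) ∈ NN i) →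
      g ≠ 0 → iotaP (e i) (Y i) g = 0 →
      (∀ α β : ℕ, (g.coeff β).coeff α ≠ 0 → (α, β) ∈ NN i) →
      ∃ a : ℂ, a ≠ 0 ∧ g = Polynomial.C (Polynomial.C a) * fi := by
  -- basic positivity
  have kkpos : ∀ j, 1 ≤ j → j ≤ s → 0 < kk j := fun j h1 h2 => (hkk j h1 h2).1.1
  have epos : ∀ j, j ≤ s → 0 < e j := by
    intro j
    induction j with
    | zero => intro _; simp [he0]
    | succ n ih =>
      intro hn
      have := he (n+1) (by omega) hn
      simp only [Nat.add_sub_cancel] at this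
      rw [this]
      exact Nat.mul_pos (kkpos (n+1) (by omega) hn) (ih (by omega))
  -- monotonicity of lam
  have lamlt : ∀ a b, 1 ≤ a → a < b → b ≤ s → lam a < lam b := by
    intro a b ha hab
    induction b with
    | zero => omega
    | succ n ih =>
      intro hbs
      rcases Nat.lt_or_ge a n with h | h
      · exact lt_trans (ih (by omega) (by omega)) (hlam_mono n (by omega) (by omega))
      · have : a = n := by omega
        subst this
        exact hlam_mono a ha (by omega)
  have lamle : ∀ a b, 1 ≤ a → a ≤ b → b ≤ s → lam a ≤ lam b := by
    intro a b ha hab hbs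
    rcases eq_or_lt_of_le hab with h | h
    · subst h; exact le_rfl
    · exact le_of_lt (lamlt a b ha h hbs)
  have lamgt1 : ∀ a, 1 ≤ a → a ≤ s → 1 < lam a := by
    intro a ha has
    rcases eq_or_lt_of_le ha with h | h
    · rw [← h]; exact hlam1
    · exact lt_trans hlam1 (lamlt 1 a (by omega) h has)
  -- M j = zmultiples (1 / e j)
  have Mzm : ∀ j, j ≤ s → M j = AddSubgroup.zmultiples ((e j : ℚ)⁻¹) := by
    intro j
    induction j with
    | zero =>
      intro _
      rw [hM 0, he0]
      have h2 : Set.Icc (1:ℕ) 0 = (∅ : Set ℕ) := Set.Icc_eq_empty (by norm_num)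
      rw [h2, Set.image_empty, Set.union_empty]
      ext q
      simp [AddSubgroup.mem_closure_singleton, AddSubgroup.mem_zmultiples_iff]
    | succ j ih =>
      intro hj1
      have hj : j ≤ s := by omega
      have IH := ih hj
      have hmpos : 0 < e j := epos j hj
      have hmQ : (0:ℚ) < (e j : ℚ) := by exact_mod_cast hmpos
      have he' : e (j+1) = kk (j+1) * e j := by
        have := he (j+1) (by omega) hj1
        simpa using this
      have hk := hkk (j+1) (by omega) hj1
      simp only [Nat.add_sub_cancel] at hk
      have kpos : 0 < kk (j+1) := hk.1.1
      set ρ : ℚ := (e j : ℚ) * lam (j+1) with hρ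

      have hlamρ : lam (j+1) = ρ / (e j : ℚ) := by rw [hρ]; field_simp
      have key : (ρ.den : ℚ) * ρ = (ρ.num : ℚ) := by
        rw [mul_comm]; exact_mod_cast Rat.mul_den_eq_num ρ
      have hden_mem : ρ.den ∈ {m : ℕ | 0 < m ∧ (m : ℚ) * lam (j+1) ∈ M j} := by
        refine ⟨ρ.pos, ?_⟩
        rw [IH, AddSubgroup.mem_zmultiples_iff]
        refine ⟨ρ.num, ?_⟩
        rw [zsmul_eq_mul, hlamρ, div_eq_mul_inv, ← mul_assoc, key]
      have hkle : kk (j+1) ≤ ρ.den := hk.2 hden_mem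
      -- ρ.den ∣ kk (j+1)
      have hdvd : ρ.den ∣ kk (j+1) := by
        obtain ⟨n, hn⟩ := AddSubgroup.mem_zmultiples_iff.mp (IH ▸ hk.1.2)
        rw [zsmul_eq_mul, hlamρ] at hn
        -- n * (e j)⁻¹ = k * (ρ / e j)  ⇒ n = k * ρ
        have hn' : (n : ℚ) = (kk (j+1) : ℚ) * ρ := by
          field_simp at hn
          linear_combination hn
        -- cross multiply on ℤ
        have hZ : n * (ρ.den : ℤ) = (kk (j+1) : ℤ) * ρ.num := by
          have : (n : ℚ) * (ρ.den : ℚ) = (kk (j+1) : ℚ) * ((ρ.den : ℚ) * ρ) := by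
            rw [hn']; ring
          rw [key] at this
          exact_mod_cast this
        have hdvdZ : (ρ.den : ℤ) ∣ (kk (j+1) : ℤ) * ρ.num := ⟨n, by linarith [hZ]⟩
        have hcop : IsCoprime (ρ.den : ℤ) ρ.num := by
          rw [Int.isCoprime_iff_gcd_eq_one, Int.gcd]
          simpa [Nat.coprime_comm] using ρ.reduced
        have := hcop.dvd_of_dvd_mul_right hdvdZ
        exact_mod_cast this
      have hkden : kk (j+1) = ρ.den := le_antisymm hkle (Nat.le_of_dvd kpos hdvd)
      -- Bezout
      have hcop2 : IsCoprime (ρ.num) ((kk (j+1) : ℤ)) := by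
        rw [hkden, Int.isCoprime_iff_gcd_eq_one, Int.gcd]
        simpa using ρ.reduced
      obtain ⟨u, v, huv⟩ := hcop2
      have he'' : ((e (j+1) : ℚ)) = (kk (j+1) : ℚ) * (e j : ℚ) := by exact_mod_cast he'
      have he''pos : (0:ℚ) < (e (j+1) : ℚ) := by exact_mod_cast epos (j+1) hj1
      have hkQpos : (0:ℚ) < (kk (j+1) : ℚ) := by exact_mod_cast kpos
      -- lam (j+1) = ρ.num / e (j+1)
      have hlam_rep : lam (j+1) = (ρ.num : ℚ) * ((e (j+1) : ℚ))⁻¹ := by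
        have h1 : (ρ.num : ℚ) = (ρ.den : ℚ) * ((e j : ℚ) * lam (j+1)) := by
          rw [← key, hρ]
        have hd0 : ((ρ.den : ℚ)) ≠ 0 := by
          exact_mod_cast ρ.pos.ne'
        have hm0 : ((e j : ℚ)) ≠ 0 := ne_of_gt hmQ
        rw [h1, he'', hkden, mul_inv]
        rw [show (ρ.den:ℚ) * ((e j:ℚ) * lam (j+1)) * (((ρ.den:ℚ))⁻¹ * ((e j:ℚ))⁻¹) =
          lam (j+1) * (((ρ.den:ℚ) * ((ρ.den:ℚ))⁻¹) * ((e j:ℚ) * ((e j:ℚ))⁻¹)) from by ring]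
        rw [mul_inv_cancel₀ hd0, mul_inv_cancel₀ hm0]
        ring
      apply le_antisymm
      · rw [hM (j+1)]
        apply (AddSubgroup.closure_le _).mpr
        rintro q (rfl | ⟨ℓ, ⟨hℓ1, hℓ2⟩, rfl⟩)
        · rw [SetLike.mem_coe, AddSubgroup.mem_zmultiples_iff]
          exact ⟨e (j+1), by rw [zsmul_eq_mul]; field_simp; norm_cast⟩
        · rw [SetLike.mem_coe, AddSubgroup.mem_zmultiples_iff]
          rcases Nat.lt_or_ge ℓ (j+1) with hcase | hcase
          · -- lam ℓ ∈ M j = zmultiples (e j)⁻¹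
            have : lam ℓ ∈ M j := by
              rw [hM j]
              exact AddSubgroup.subset_closure (Or.inr ⟨ℓ, ⟨hℓ1, by omega⟩, rfl⟩)
            rw [IH, AddSubgroup.mem_zmultiples_iff] at this
            obtain ⟨n, hn⟩ := this
            refine ⟨n * kk (j+1), ?_⟩
            rw [zsmul_eq_mul] at hn ⊢
            rw [← hn, he'']
            push_cast
            field_simp
          · have hℓeq : ℓ = j + 1 := by omega
            subst hℓeq
            exact ⟨ρ.num, by rw [zsmul_eq_mul, hlam_rep]⟩
      · -- zmultiples (e (j+1))⁻¹ ≤ M (j+1)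
        have hmem1 : lam (j+1) ∈ M (j+1) := by
          rw [hM (j+1)]
          exact AddSubgroup.subset_closure (Or.inr ⟨j+1, ⟨by omega, by omega⟩, rfl⟩)
        have hmem2 : ((e j : ℚ))⁻¹ ∈ M (j+1) := by
          have hMle : M j ≤ M (j+1) := by
            rw [hM j, hM (j+1)]
            apply AddSubgroup.closure_mono
            apply Set.union_subset_union_right
            apply Set.image_mono
            exact Set.Icc_subset_Icc_right (by omega)
          apply hMle
          rw [IH]
          exact AddSubgroup.mem_zmultiples _
        have hgen : ((e (j+1) : ℚ))⁻¹ ∈ M (j+1) := by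
          have hrep : ((e (j+1) : ℚ))⁻¹ = u • lam (j+1) + v • ((e j : ℚ))⁻¹ := by
            rw [zsmul_eq_mul, zsmul_eq_mul, hlam_rep, he'']
            have h1 : ((e j : ℚ))⁻¹ = (kk (j+1) : ℚ) * ((kk (j+1) : ℚ) * (e j : ℚ))⁻¹ := by
              field_simp
            rw [h1]
            have huvQ : (u : ℚ) * (ρ.num : ℚ) + (v : ℚ) * (kk (j+1) : ℚ) = 1 := by
              exact_mod_cast congrArg (fun z : ℤ => (z : ℚ)) huv
            field_simp
            nlinarith [huvQ]
          rw [hrep]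
          exact AddSubgroup.add_mem _ (AddSubgroup.zsmul_mem _ hmem1 u) (AddSubgroup.zsmul_mem _ hmem2 v)
        intro q hq
        rw [AddSubgroup.mem_zmultiples_iff] at hq
        obtain ⟨n, rfl⟩ := hq
        exact AddSubgroup.zsmul_mem _ hgen n
  -- main part
  intro i hi1 his fi g hfi hfiι hfisupp hg0 hgι hgsupp
  obtain ⟨hfmonic, hfdeg, -⟩ := hfi
  have espos : 0 < e i := epos i his
  have esQ : (0:ℚ) < (e i : ℚ) := by exact_mod_cast espos
  have eslast : 0 < e s := epos s le_rfl
  have eslastQ : (0:ℚ) < (e s : ℚ) := by exact_mod_cast eslast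
  have ediv : e i ∣ e s := by
    have : ∀ j, i ≤ j → j ≤ s → e i ∣ e j := by
      intro j hij
      induction j with
      | zero => intro _; exact (by omega : i = 0) ▸ dvd_refl _
      | succ n ih =>
        intro hns
        rcases Nat.lt_or_ge i (n+1) with h | h
        · have hstep : e (n+1) = kk (n+1) * e n := by
            have := he (n+1) (by omega) hns
            simpa using this
          rw [hstep]
          exact Dvd.dvd.mul_left (ih (by omega) (by omega)) _
        · have : i = n + 1 := by omega
          subst this
          exact dvd_refl _
    exact this s his (le_refl s)
  have hrmul : (e s / e i) * e i = e s := Nat.div_mul_cancel ediv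
  have rpos : 0 < e s / e i := by
    rcases Nat.eq_zero_or_pos (e s / e i) with h | h
    · rw [h] at hrmul; omega
    · exact h
  -- the coefficient of Y i at E i ℓ is c ℓ
  have hcastE : ∀ ℓ, 1 ≤ ℓ → ℓ ≤ i → (((E i ℓ) * (e s / e i) : ℕ) : ℚ) = (e s : ℚ) * lam ℓ := by
    intro ℓ hℓ1 hℓi
    push_cast
    rw [hE i hi1 his ℓ hℓ1 hℓi]
    have hq : ((e s / e i : ℕ) : ℚ) * (e i : ℚ) = (e s : ℚ) := by
      exact_mod_cast congrArg (fun n : ℕ => (n:ℚ)) hrmul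
    linear_combination (lam ℓ) * hq
  have hφszero : ∀ ℓ ℓ', 1 ≤ ℓ → ℓ ≤ i → 1 ≤ ℓ' → ℓ' ≤ i →
      (φs i ℓ').coeff (E i ℓ) = 0 := by
    intro ℓ ℓ' hℓ1 hℓi hℓ'1 hℓ'i
    by_contra hne
    have hexp : Polynomial.expand ℂ (e s / e i) (φs i ℓ') = φ ℓ' := by
      rw [expand_eq_comp_X_pow]
      exact hφs i hi1 his ℓ' hℓ'1 hℓ'i
    have hmem : (E i ℓ) * (e s / e i) ∈ (φ ℓ').support := by
      rw [mem_support_iff, ← hexp, coeff_expand_mul rpos]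
      exact hne
    have h1 := hφord ℓ' hℓ'1 (hℓ'i.trans his) _ hmem
    rw [hcastE ℓ hℓ1 hℓi] at h1
    have hlt1 : lam ℓ' < lam ℓ := (mul_lt_mul_iff_right₀ eslastQ).mp h1
    have hℓ'ℓ : ℓ' < ℓ := by
      by_contra hcon
      push_neg at hcon
      exact absurd (lamle ℓ ℓ' hℓ1 hcon (hℓ'i.trans his)) (not_le.mpr hlt1)
    have h2 := hφdeg ℓ' hℓ'1 (by omega) _ hmem
    rw [hcastE ℓ hℓ1 hℓi] at h2
    have hlt2 : lam ℓ < lam (ℓ' + 1) := (mul_lt_mul_iff_right₀ eslastQ).mp h2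
    have : ℓ < ℓ' + 1 := by
      by_contra hcon
      push_neg at hcon
      exact absurd (lamle (ℓ'+1) ℓ (by omega) hcon (hℓi.trans his)) (not_le.mpr hlt2)
    omega
  have Esupp : ∀ ℓ, 1 ≤ ℓ → ℓ ≤ i → (Y i).coeff (E i ℓ) = c ℓ := by
    intro ℓ hℓ1 hℓi
    rw [hY i hi1 his, finset_sum_coeff]
    rw [Finset.sum_eq_single ℓ]
    · rw [coeff_add, hφszero ℓ ℓ hℓ1 hℓi hℓ1 hℓi, add_zero, coeff_C_mul, coeff_X_pow,
        if_pos rfl, mul_one]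
    · intro ℓ' hmem' hne'
      rw [Finset.mem_Icc] at hmem'
      have hEne : E i ℓ' ≠ E i ℓ := by
        intro hEq
        have hQ : (e i : ℚ) * lam ℓ' = (e i : ℚ) * lam ℓ := by
          rw [← hE i hi1 his ℓ' hmem'.1 hmem'.2, ← hE i hi1 his ℓ hℓ1 hℓi, hEq]
        have hlam : lam ℓ' = lam ℓ := mul_left_cancel₀ (ne_of_gt esQ) hQ
        rcases lt_trichotomy ℓ' ℓ with h | h | h
        · exact absurd hlam (ne_of_lt (lamlt ℓ' ℓ hmem'.1 h (hℓi.trans his)))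
        · exact hne' h
        · exact absurd hlam.symm (ne_of_lt (lamlt ℓ ℓ' hℓ1 h (hmem'.2.trans his)))
      rw [coeff_add, hφszero ℓ ℓ' hℓ1 hℓi hmem'.1 hmem'.2, add_zero, coeff_C_mul,
        coeff_X_pow, if_neg (fun h : E i ℓ = E i ℓ' => hEne h.symm), mul_zero]
    · intro habs
      exact absurd (Finset.mem_Icc.mpr ⟨hℓ1, hℓi⟩) habs
  -- roots of unity fixing Y i are trivial
  have zeta_one : ∀ ζ : ℂ, ζ ^ (e i) = 1 → (∀ a, (Y i).coeff a ≠ 0 → ζ ^ a = 1) → ζ = 1 := by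
    intro ζ hζe hζa
    have hζ0 : ζ ≠ 0 := by
      intro h
      rw [h, zero_pow (Nat.pos_iff_ne_zero.mp espos)] at hζe
      exact zero_ne_one hζe
    have hesQ0 : ((e i : ℚ)) ≠ 0 := ne_of_gt esQ
    set H : AddSubgroup ℚ :=
      { carrier := {q : ℚ | ∃ n : ℤ, q = (n : ℚ) * ((e i : ℚ))⁻¹ ∧ ζ ^ n = 1}
        zero_mem' := ⟨0, by simp, by simp⟩
        add_mem' := by
          rintro a b ⟨n1, rfl, h1⟩ ⟨n2, rfl, h2⟩
          exact ⟨n1 + n2, by push_cast; ring, by rw [zpow_add₀ hζ0, h1, h2, one_mul]⟩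
        neg_mem' := by
          rintro a ⟨n, rfl, h1⟩
          exact ⟨-n, by push_cast; ring, by rw [zpow_neg, h1, inv_one]⟩ } with hH
    have hmemH : ∀ q : ℚ, q ∈ H ↔ ∃ n : ℤ, q = (n : ℚ) * ((e i : ℚ))⁻¹ ∧ ζ ^ n = 1 := by
      intro q; rfl
    have hMH : M i ≤ H := by
      rw [hM i]
      apply (AddSubgroup.closure_le _).mpr
      rintro q (rfl | ⟨ℓ, ⟨hℓ1, hℓ2⟩, rfl⟩)
      · rw [SetLike.mem_coe, hmemH]
        refine ⟨(e i : ℤ), ?_, ?_⟩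
        · push_cast
          field_simp
        · rw [zpow_natCast]; exact hζe
      · rw [SetLike.mem_coe, hmemH]
        refine ⟨(E i ℓ : ℤ), ?_, ?_⟩
        · have hEq := hE i hi1 his ℓ hℓ1 hℓ2
          push_cast
          rw [hEq]
          field_simp
        · rw [zpow_natCast]
          apply hζa
          rw [Esupp ℓ hℓ1 hℓ2]
          exact hc ℓ hℓ1 (hℓ2.trans his)
    have hinv : ((e i : ℚ))⁻¹ ∈ M i := by
      rw [Mzm i his]
      exact AddSubgroup.mem_zmultiples _
    obtain ⟨n, hn1, hn2⟩ := (hmemH _).mp (hMH hinv)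
    have h1 : (1:ℚ) * ((e i:ℚ))⁻¹ = (n:ℚ) * ((e i:ℚ))⁻¹ := by rw [one_mul]; exact hn1
    have h2 : (1:ℚ) = (n:ℚ) := mul_right_cancel₀ (inv_ne_zero hesQ0) h1
    have h3 : n = 1 := by exact_mod_cast h2.symm
    rw [h3] at hn2
    simpa using hn2
  -- minimality: low degree polynomials pulled back to zero vanish
  have vanish : ∀ rr : Polynomial (Polynomial ℂ), rr.natDegree < e i →
      iotaP (e i) (Y i) rr = 0 → rr = 0 := by
    intro rr hdeg hι
    set f : ℂ[X] →+* ℂ[X] := (aeval ((X : ℂ[X]) ^ e i)).toRingHom with hf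
    have hcomp : ∀ p : ℂ[X], f p = p.comp ((X:ℂ[X]) ^ e i) := by
      intro p
      rw [comp_eq_aeval]
      rfl
    have finj : Function.Injective f := by
      intro p q hpq
      have hz : f (p - q) = 0 := by rw [map_sub, hpq, sub_self]
      rw [hcomp] at hz
      rcases comp_eq_zero_iff.mp hz with h | ⟨-, h2⟩
      · exact sub_eq_zero.mp h
      · exfalso
        have := congrArg natDegree h2
        rw [natDegree_X_pow, natDegree_C] at this
        omega
    have hroot : ∀ ζ : ℂ, ζ ^ e i = 1 →
        (rr.map f).eval ((aeval (C ζ * X)) (Y i)) = 0 := by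
      intro ζ hζ
      have hσ : (aeval (C ζ * X) : ℂ[X] →ₐ[ℂ] ℂ[X]).comp
          (aeval ((X:ℂ[X]) ^ e i)) = aeval ((X:ℂ[X]) ^ e i) := by
        apply Polynomial.algHom_ext
        simp [mul_pow, ← C_pow, hζ]
      have h0 : (aeval (C ζ * X) : ℂ[X] →ₐ[ℂ] ℂ[X]).toRingHom
          (iotaP (e i) (Y i) rr) = 0 := by
        rw [hι, map_zero]
      unfold iotaP at h0
      rw [Polynomial.hom_eval₂] at h0
      have hcc : ((aeval (C ζ * X) : ℂ[X] →ₐ[ℂ] ℂ[X]).toRingHom).comp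
          ((aeval ((X:ℂ[X]) ^ e i) : ℂ[X] →ₐ[ℂ] ℂ[X]).toRingHom) =
          ((aeval ((X:ℂ[X]) ^ e i) : ℂ[X] →ₐ[ℂ] ℂ[X]).toRingHom) := by
        exact RingHom.ext fun p => DFunLike.congr_fun hσ p
      rw [hcc] at h0
      rw [eval_map]
      exact h0
    have hene : e i ≠ 0 := by omega
    set ζ0 : ℂ := Complex.exp (2 * Real.pi * Complex.I / (e i)) with hζ0def
    have hζ0 : IsPrimitiveRoot ζ0 (e i) := Complex.isPrimitiveRoot_exp _ hene
    have hz0ne : ζ0 ≠ 0 := hζ0.ne_zero hene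
    set S : Finset ℂ[X] :=
      (Finset.range (e i)).image (fun j => (aeval (C (ζ0 ^ j) * X)) (Y i)) with hS
    have hcardS : S.card = e i := by
      rw [hS, Finset.card_image_of_injOn, Finset.card_range]
      intro j1 hj1 j2 hj2 heq
      simp only [Finset.coe_range, Set.mem_Iio] at hj1 hj2
      apply hζ0.pow_inj hj1 hj2
      have hcoe : ∀ a, (Y i).coeff a ≠ 0 → (ζ0^j1)^a = (ζ0^j2)^a := by
        intro a ha
        have hco := congrArg (fun p => p.coeff a) heq
        simp only [aux_coeff_scale] at hco
        exact mul_right_cancel₀ ha hco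
      set ζ : ℂ := ζ0 ^ j2 * (ζ0 ^ j1)⁻¹ with hζdef
      have hζe : ζ ^ e i = 1 := by
        rw [hζdef, mul_pow, inv_pow, ← pow_mul, ← pow_mul, mul_comm j2, mul_comm j1,
          pow_mul, pow_mul, hζ0.pow_eq_one, one_pow, one_pow, inv_one, mul_one]
      have hζall : ∀ a, (Y i).coeff a ≠ 0 → ζ ^ a = 1 := by
        intro a ha
        rw [hζdef, mul_pow, inv_pow, ← hcoe a ha]
        exact mul_inv_cancel₀ (pow_ne_zero _ (pow_ne_zero _ hz0ne))
      have hζ1 := zeta_one ζ hζe hζall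
      rw [hζdef] at hζ1
      have hfinal := (div_eq_one_iff_eq (pow_ne_zero j1 hz0ne)).mp
        (by rw [div_eq_mul_inv]; exact hζ1)
      exact hfinal.symm
    have hGroots : ∀ x ∈ S, (rr.map f).eval x = 0 := by
      intro x hx
      rw [hS, Finset.mem_image] at hx
      obtain ⟨j, hj, rfl⟩ := hx
      apply hroot
      rw [← pow_mul, mul_comm, pow_mul, hζ0.pow_eq_one, one_pow]
    have hGdeg : (rr.map f).natDegree < S.card := by
      rw [hcardS]
      exact lt_of_le_of_lt natDegree_map_le hdeg
    have hG0 : rr.map f = 0 :=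
      Polynomial.eq_zero_of_natDegree_lt_card_of_eval_eq_zero' _ S hGroots hGdeg
    exact Polynomial.map_injective f finj (by rwa [Polynomial.map_zero])
  -- division
  have hfne : fi ≠ 0 := hfmonic.ne_zero
  have hsum := modByMonic_add_div g fi
  have hrι : iotaP (e i) (Y i) (g %ₘ fi) = 0 := by
    have h0 : iotaP (e i) (Y i) (g %ₘ fi + fi * (g /ₘ fi)) = iotaP (e i) (Y i) g :=
      congrArg _ hsum
    unfold iotaP at h0 hfiι hgι ⊢
    rw [eval₂_add, eval₂_mul, hfiι, hgι, zero_mul, add_zero] at h0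
    exact h0
  have hdeglt : (g %ₘ fi).natDegree < e i := by
    by_cases hr0 : g %ₘ fi = 0
    · rw [hr0]; simpa using espos
    · have h1 := degree_modByMonic_lt g hfmonic
      have := natDegree_lt_natDegree hr0 h1
      omega
  have hmod0 : g %ₘ fi = 0 := vanish _ hdeglt hrι
  have hgfq : g = fi * (g /ₘ fi) := by
    conv_lhs => rw [← hsum]
    rw [hmod0, zero_add]
  have hq0 : g /ₘ fi ≠ 0 := fun h => hg0 (by rw [hgfq, h, mul_zero])
  -- positivity of mu i
  have hmupos : 0 < mu i := by
    rcases hmu i hi1 his with ⟨h1, h2⟩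
    by_cases hφi : φ i = 0
    · rw [h2 hφi]
      exact lt_trans zero_lt_one (lamgt1 i hi1 his)
    · rw [h1 hφi]
      apply div_pos _ esQ
      have hnd : 0 < (φs i i).natDegree := by
        by_contra hnd
        push_neg at hnd
        have h0 : φs i i = C ((φs i i).coeff 0) := eq_C_of_natDegree_le_zero (by omega)
        have hφeq : φ i = C ((φs i i).coeff 0) := by
          conv_lhs => rw [← hφs i hi1 his i hi1 le_rfl, h0, C_comp]
        apply hφi
        have hz := hφ0 i hi1 his
        rw [hφeq] at hz
        simp only [coeff_C_zero] at hz
        rw [hφeq, hz, map_zero]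
      exact_mod_cast hnd
  -- support bound: β ≤ e i
  have hNle : ∀ α β : ℕ, (α, β) ∈ NN i →
      (e i : ℚ) * α + ((e i:ℚ) * mu i) * β ≤ (e i:ℚ) * ((e i:ℚ) * mu i) := by
    intro α β h
    rw [hNN i hi1 his] at h
    exact h.2
  have hβle : ∀ α β : ℕ, (g.coeff β).coeff α ≠ 0 → β ≤ e i := by
    intro α β h
    have h2 := hNle α β (hgsupp α β h)
    by_contra hgt
    push_neg at hgt
    have hβQ : (e i : ℚ) + 1 ≤ (β : ℚ) := by exact_mod_cast hgt
    have hαQ : (0:ℚ) ≤ (α : ℚ) := Nat.cast_nonneg α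
    nlinarith [mul_pos esQ hmupos, mul_le_mul_of_nonneg_left hβQ (mul_pos esQ hmupos).le,
      mul_nonneg esQ.le hαQ]
  have hgdeg : g.natDegree ≤ e i := by
    rw [natDegree_le_iff_coeff_eq_zero]
    intro N hN
    by_contra hcoeff
    obtain ⟨α, hα⟩ : ∃ α, (g.coeff N).coeff α ≠ 0 := by
      by_contra hno
      push_neg at hno
      exact hcoeff (Polynomial.ext fun n => by simpa using hno n)
    have := hβle α N hα
    omega
  -- the quotient is a constant
  have hqdeg : (g /ₘ fi).natDegree = 0 := by
    have hlc : fi.leadingCoeff * (g /ₘ fi).leadingCoeff ≠ 0 := by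
      rw [hfmonic.leadingCoeff, one_mul]
      exact leadingCoeff_ne_zero.mpr hq0
    have hmul := natDegree_mul' hlc
    rw [← hgfq, hfdeg] at hmul
    omega
  have hqC : g /ₘ fi = C ((g /ₘ fi).coeff 0) := eq_C_of_natDegree_le_zero (le_of_eq hqdeg)
  set a : ℂ[X] := (g /ₘ fi).coeff 0 with ha
  have hane : a ≠ 0 := by
    intro h
    apply hq0
    rw [hqC, h, map_zero]
  -- a is a constant polynomial
  have hceq : g.coeff (e i) = a := by
    rw [hgfq, hqC, coeff_mul_C]
    have : fi.coeff (e i) = 1 := by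
      have := hfmonic.coeff_natDegree
      rwa [hfdeg] at this
    rw [this, one_mul]
  have haconst : ∀ α, α ≠ 0 → a.coeff α = 0 := by
    intro α hα
    by_contra h
    have hmem : ((α : ℕ), e i) ∈ NN i := by
      apply hgsupp
      rw [hceq]
      exact h
    have h2 := hNle α (e i) hmem
    have hαQ : (1:ℚ) ≤ (α : ℚ) := by
      have : 1 ≤ α := by omega
      exact_mod_cast this
    nlinarith
  have haC : a = Polynomial.C (a.coeff 0) := by
    apply eq_C_of_natDegree_le_zero
    rw [natDegree_le_iff_coeff_eq_zero]
    intro N hN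
    exact haconst N (by omega)
  refine ⟨a.coeff 0, ?_, ?_⟩
  · intro h
    apply hane
    rw [haC, h, map_zero]
  · conv_lhs => rw [hgfq, hqC]
    conv_lhs => rw [haC]
    exact mul_comm _ _
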